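/- Let K be a number field with ring of integers O_K, let (a_1,...,a_n) ∈ O_K^n, and suppose ω_1,...,ω_n are roots of unity in some extension of K with Σ_{i=1}^n a_i ω_i = 0. If (a_1,...,a_n) admits a balanced multiset of tuples over K, then (ω_1 a_1,...,ω_n a_n) admits a balanced multiset of tuples over K(ω_1,...,ω_n). -/

import Mathlib

/-- A balanced multiset of tuples with respect to coefficients `a : Fin n → K`. -/
def IsBalanced {K : Type*} [Field K] {n : ℕ} (a : Fin n → K)
    (S : Multiset (Fin n → K)) : Prop :=
  S ≠ 0 ∧ (∀ v ∈ S, v ≠ 0 ∧ ∑ i, a i * v i = 0) ∧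
    ∀ j k : Fin n, S.map (fun v => v j) = S.map (fun v => v k)

theorem balanced_mul_root_of_unity (K : Type*) [Field K] [NumberField K]
    (L : Type*) [Field L] [Algebra K L] (n : ℕ)
    (a : Fin n → NumberField.RingOfIntegers K) (ω : Fin n → L)
    (hω : ∀ i, ∃ m : ℕ, 0 < m ∧ ω i ^ m = 1)
    (hsum : ∑ i, algebraMap K L (a i : K) * ω i = 0)
    (S : Multiset (Fin n → K)) (hS : IsBalanced (fun i => (a i : K)) S) :
    ∃ T : Multiset (Fin n → L),
      IsBalanced (fun i => ω i * algebraMap K L (a i : K)) T ∧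
      ∀ v ∈ T, ∀ i, v i ∈ IntermediateField.adjoin K (Set.range ω) := by
  classical
  obtain ⟨hS0, hSv, hSbal⟩ := hS
  choose m hm hω1 using hω
  set M : ℕ := ∏ i, m i with hM
  have hMpos : 0 < M := Finset.prod_pos (fun i _ => hm i)
  have : NeZero M := ⟨hMpos.ne'⟩
  have hωM : ∀ i, ω i ^ M = 1 := by
    intro i
    obtain ⟨c, hc⟩ := Finset.dvd_prod_of_mem m (Finset.mem_univ i)
    rw [hM, hc, pow_mul, hω1 i, one_pow]
  have hωne : ∀ i, ω i ≠ 0 := by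
    intro i h
    exact one_ne_zero (by rw [← hωM i, h, zero_pow hMpos.ne'])
  set F := IntermediateField.adjoin K (Set.range ω) with hF
  have hωF : ∀ i, ω i ∈ F := fun i => IntermediateField.subset_adjoin _ _ ⟨i, rfl⟩
  set ωF : Fin n → F := fun i => ⟨ω i, hωF i⟩ with hωFdef
  have hωFM : ∀ i, ωF i ^ M = 1 := by
    intro i
    apply Subtype.ext
    simpa [SubmonoidClass.coe_pow] using hωM i
  set u : Fin n → rootsOfUnity M F := fun i => rootsOfUnity.mkOfPowEq _ (hωFM i) with hu
  set C : rootsOfUnity M F → L := fun c => (((c : Fˣ) : F) : L) with hC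
  have hCmul : ∀ c d, C (c * d) = C c * C d := by intro c d; simp [hC]
  have hCpow : ∀ c (p : ℕ), C (c ^ p) = C c ^ p := by intro c p; simp [hC]
  have hCu : ∀ i, C (u i) = ω i := by
    intro i
    simp [hC, hu, rootsOfUnity.coe_mkOfPowEq, hωFdef]
  have hCne : ∀ c, C c ≠ 0 := by
    intro c
    simpa [hC] using Units.ne_zero (c : Fˣ)
  have hCF : ∀ c, C c ∈ F := fun c => SetLike.coe_mem _
  have : Fintype (rootsOfUnity M F) := Fintype.ofFinite _
  set G : Multiset (rootsOfUnity M F) := Finset.univ.val with hG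
  have hGne : G ≠ 0 := by
    intro h
    have h1 : (1 : rootsOfUnity M F) ∈ G := Finset.mem_univ_val _
    rw [h] at h1
    exact Multiset.notMem_zero _ h1
  have hGkey : ∀ j : Fin n, G.map (fun c => C c * (ω j) ^ (M - 1)) = G.map C := by
    intro j
    have hbij : G.map (· * (u j) ^ (M - 1)) = G := by
      have h1 := congrArg Finset.val (Finset.map_univ_equiv (Equiv.mulRight ((u j) ^ (M - 1))))
      rw [Finset.map_val] at h1
      rw [hG]
      simpa only [Equiv.coe_toEmbedding, Equiv.coe_mulRight] using h1
    calc G.map (fun c => C c * (ω j) ^ (M - 1))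
        = (G.map (· * (u j) ^ (M - 1))).map C := by
          rw [Multiset.map_map]
          apply Multiset.map_congr rfl
          intro c _
          simp [Function.comp, hCmul, hCpow, hCu]
      _ = G.map C := by rw [hbij]
  have key2 : ∀ (j : Fin n) (y : L),
      G.map (fun c => C c * (ω j) ^ (M - 1) * y) = G.map (fun c => C c * y) := by
    intro j y
    have h := congrArg (Multiset.map (· * y)) (hGkey j)
    simpa [Multiset.map_map, Function.comp] using h
  have hpow1 : ∀ i, ω i * ω i ^ (M - 1) = 1 := by
    intro i
    rw [← pow_succ', Nat.sub_add_cancel hMpos, hωM i]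
  set T : Multiset (Fin n → L) :=
    S.bind (fun v => G.map (fun c => fun i => C c * (ω i) ^ (M - 1) * algebraMap K L (v i)))
    with hT
  have hmemT : ∀ w ∈ T, ∃ v ∈ S, ∃ c : rootsOfUnity M F,
      w = fun i => C c * (ω i) ^ (M - 1) * algebraMap K L (v i) := by
    intro w hw
    rw [hT, Multiset.mem_bind] at hw
    obtain ⟨v, hv, hw⟩ := hw
    rw [Multiset.mem_map] at hw
    obtain ⟨c, _, hc⟩ := hw
    exact ⟨v, hv, c, hc.symm⟩
  refine ⟨T, ⟨?_, ?_, ?_⟩, ?_⟩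
  · -- T ≠ 0
    obtain ⟨v, hv⟩ := Multiset.exists_mem_of_ne_zero hS0
    obtain ⟨c, hc⟩ := Multiset.exists_mem_of_ne_zero hGne
    intro h
    have : (fun i => C c * (ω i) ^ (M - 1) * algebraMap K L (v i)) ∈ T := by
      rw [hT, Multiset.mem_bind]
      exact ⟨v, hv, Multiset.mem_map_of_mem _ hc⟩
    rw [h] at this
    exact Multiset.notMem_zero _ this
  · -- nonzero and sum
    intro w hw
    obtain ⟨v, hv, c, rfl⟩ := hmemT w hw
    constructor
    · obtain ⟨i, hi⟩ := Function.ne_iff.mp (hSv v hv).1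
      apply Function.ne_iff.mpr
      refine ⟨i, ?_⟩
      have halg : algebraMap K L (v i) ≠ 0 := fun h =>
        hi ((algebraMap K L).injective (by simpa using h))
      exact mul_ne_zero (mul_ne_zero (hCne c) (pow_ne_zero _ (hωne i))) halg
    · have hterm : ∀ i : Fin n,
          ω i * algebraMap K L ((a i : K)) * (C c * (ω i) ^ (M - 1) * algebraMap K L (v i))
            = C c * algebraMap K L ((a i : K) * v i) := by
        intro i
        rw [map_mul]
        calc ω i * algebraMap K L ((a i : K)) * (C c * (ω i) ^ (M - 1) * algebraMap K L (v i))
            = (ω i * ω i ^ (M - 1)) * (C c * (algebraMap K L ((a i : K)) * algebraMap K L (v i)))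
              := by ring
          _ = C c * (algebraMap K L ((a i : K)) * algebraMap K L (v i)) := by
              rw [hpow1 i, one_mul]
      calc ∑ i, ω i * algebraMap K L ((a i : K)) *
              (C c * (ω i) ^ (M - 1) * algebraMap K L (v i))
          = ∑ i, C c * algebraMap K L ((a i : K) * v i) :=
            Finset.sum_congr rfl (fun i _ => hterm i)
        _ = C c * algebraMap K L (∑ i, (a i : K) * v i) := by
            rw [map_sum, Finset.mul_sum]
        _ = 0 := by rw [(hSv v hv).2, map_zero, mul_zero]
  · -- balance
    intro j k
    have hTj : ∀ j : Fin n, T.map (fun w => w j)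
        = (S.map (fun v => v j)).bind (fun x => G.map (fun c => C c * algebraMap K L x)) := by
      intro j
      rw [hT, Multiset.map_bind, Multiset.bind_map]
      refine Multiset.bind_congr (fun v _ => ?_)
      rw [Multiset.map_map]
      exact key2 j (algebraMap K L (v j))
    rw [hTj j, hTj k, hSbal j k]
  · -- membership
    intro w hw i
    obtain ⟨v, hv, c, rfl⟩ := hmemT w hw
    exact mul_mem (mul_mem (hCF c) (pow_mem (hωF i) _)) (IntermediateField.algebraMap_mem F _)
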